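/- arXiv:2005.09744 — 2 statements merged into one kernel-verified Lean document; each statement's English description precedes it below -/
import Mathlib

section
/- Let X = ⌊Y⌋ where Y has continuous log-symmetric CDF F_Y(y) = G((1/√φ) log(y/λ)) with G a strictly increasing continuous CDF satisfying G(0) = 1/2. If λ is a positive natural number, then λ − 1 is a median of X, i.e., P(X ≤ λ − 1) ≥ 1/2 and P(X ≥ λ − 1) ≥ 1/2. -/
open MeasureTheory

/-- Let `X = ⌊Y⌋` where `Y` has continuous log-symmetric CDF
`F_Y(y) = G(log(y/λ)/√φ)` with `G` a continuous strictly increasing CDF with `G(0) = 1/2`.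
If `λ` is a positive natural number `n`, then `n - 1` is a median of `X`:
`P(X ≤ n-1) ≥ 1/2` and `P(X ≥ n-1) ≥ 1/2`. -/
theorem stmt_13 (n : ℕ) (hn : 0 < n) (phi : ℝ) (hphi : 0 < phi)
    (G : ℝ → ℝ) (hmono : StrictMono G) (hcont : Continuous G) (hG0 : G 0 = 1 / 2)
    (μ : Measure ℝ) [IsProbabilityMeasure μ] (hsupp : μ (Set.Iic (0 : ℝ)) = 0)
    (hFY : ∀ t : ℝ, 0 < t →
      (μ (Set.Iic t)).toReal = G (Real.log (t / (n : ℝ)) / Real.sqrt phi)) :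
    1 / 2 ≤ (μ {y : ℝ | ⌊y⌋ ≤ (n : ℤ) - 1}).toReal ∧
      1 / 2 ≤ (μ {y : ℝ | (n : ℤ) - 1 ≤ ⌊y⌋}).toReal := by
  have hnR : (0 : ℝ) < (n : ℝ) := by exact_mod_cast hn
  have hsqrt : Real.sqrt phi ≠ 0 := ne_of_gt (Real.sqrt_pos.mpr hphi)
  -- set identifications
  have hset1 : {y : ℝ | ⌊y⌋ ≤ (n : ℤ) - 1} = Set.Iio (n : ℝ) := by
    ext y
    simp only [Set.mem_setOf_eq, Set.mem_Iio]
    constructor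
    · intro h
      have : ⌊y⌋ < (n : ℤ) := by omega
      exact_mod_cast Int.floor_lt.mp this
    · intro h
      have : ⌊y⌋ < (n : ℤ) := Int.floor_lt.mpr (by exact_mod_cast h)
      omega
  have hset2 : {y : ℝ | (n : ℤ) - 1 ≤ ⌊y⌋} = Set.Ici ((n : ℝ) - 1) := by
    ext y
    simp only [Set.mem_setOf_eq, Set.mem_Ici]
    rw [Int.le_floor]
    push_cast
    constructor <;> intro h <;> linarith
  constructor
  · -- first part : 1/2 ≤ μ (Iio n)
    rw [hset1]
    have htend : Filter.Tendsto (fun t : ℝ => G (Real.log (t / (n : ℝ)) / Real.sqrt phi))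
        (nhdsWithin (n : ℝ) (Set.Iio (n : ℝ))) (nhds (1 / 2 : ℝ)) := by
      have hdiv : ContinuousAt (fun t : ℝ => t / (n : ℝ)) (n : ℝ) :=
        continuousAt_id.div continuousAt_const (ne_of_gt hnR)
      have hlogc : ContinuousAt (fun t : ℝ => Real.log (t / (n : ℝ))) (n : ℝ) :=
        ContinuousAt.comp (Real.continuousAt_log (by positivity)) hdiv
      have hc : ContinuousAt (fun t : ℝ => G (Real.log (t / (n : ℝ)) / Real.sqrt phi)) (n : ℝ) :=
        ContinuousAt.comp hcont.continuousAt (hlogc.div_const _)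
      have := hc.continuousWithinAt (s := Set.Iio (n : ℝ))
      have hval : G (Real.log ((n : ℝ) / (n : ℝ)) / Real.sqrt phi) = 1 / 2 := by
        rw [div_self (ne_of_gt hnR), Real.log_one, zero_div, hG0]
      rw [ContinuousWithinAt, hval] at this
      exact this
    have hev : ∀ᶠ t in nhdsWithin (n : ℝ) (Set.Iio (n : ℝ)),
        G (Real.log (t / (n : ℝ)) / Real.sqrt phi) ≤ (μ (Set.Iio (n : ℝ))).toReal := by
      have h1 : ∀ᶠ t in nhdsWithin (n : ℝ) (Set.Iio (n : ℝ)), (0 : ℝ) < t :=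
        eventually_nhdsWithin_of_eventually_nhds (eventually_gt_nhds hnR)
      have h2 : ∀ᶠ t in nhdsWithin (n : ℝ) (Set.Iio (n : ℝ)), t < (n : ℝ) :=
        eventually_mem_nhdsWithin
      filter_upwards [h1, h2] with t ht0 htn
      rw [← hFY t ht0]
      exact ENNReal.toReal_mono (measure_ne_top μ _)
        (measure_mono (fun x hx => lt_of_le_of_lt hx htn))
    exact le_of_tendsto htend hev
  · -- second part : 1/2 ≤ μ (Ici (n-1))
    rw [hset2]
    have hcompl : (μ (Set.Ici ((n : ℝ) - 1))).toReal = 1 - (μ (Set.Iio ((n : ℝ) - 1))).toReal := by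
      have := measure_compl (s := Set.Iio ((n : ℝ) - 1)) measurableSet_Iio (measure_ne_top μ _)
      rw [Set.compl_Iio] at this
      rw [this, measure_univ, ENNReal.toReal_sub_of_le prob_le_one ENNReal.one_ne_top]
      simp
    rw [hcompl]
    have hle : (μ (Set.Iio ((n : ℝ) - 1))).toReal ≤ 1 / 2 := by
      rcases eq_or_lt_of_le (show 1 ≤ n from hn) with h1 | h2
      · -- n = 1
        have : (n : ℝ) - 1 = 0 := by
          have : n = 1 := h1.symm
          simp [this]
        rw [this]
        have hz : μ (Set.Iio (0 : ℝ)) = 0 :=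
          measure_mono_null Set.Iio_subset_Iic_self hsupp
        rw [hz]; norm_num
      · -- n ≥ 2
        have hn1 : (0 : ℝ) < (n : ℝ) - 1 := by
          have : (2 : ℝ) ≤ (n : ℝ) := by exact_mod_cast h2
          linarith
        have hmono' : (μ (Set.Iio ((n : ℝ) - 1))).toReal ≤ (μ (Set.Iic ((n : ℝ) - 1))).toReal :=
          ENNReal.toReal_mono (measure_ne_top μ _) (measure_mono Set.Iio_subset_Iic_self)
        have hval := hFY ((n : ℝ) - 1) hn1
        have hlog : Real.log (((n : ℝ) - 1) / (n : ℝ)) < 0 := by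
          apply Real.log_neg (by positivity)
          rw [div_lt_one hnR]; linarith
        have hGlt : G (Real.log (((n : ℝ) - 1) / (n : ℝ)) / Real.sqrt phi) < G 0 := by
          apply hmono
          exact div_neg_of_neg_of_pos hlog (Real.sqrt_pos.mpr hphi)
        rw [hG0] at hGlt
        linarith [hmono', hval ▸ hGlt]
    linarith
end

section
/- Let Y have a unimodal density f on (0,∞) in the sense that there exists y₀ > 0 with f nondecreasing on (0, y₀] and nonincreasing on [y₀, ∞). Then the PMF p(x) = ∫_x^{x+1} f of X = ⌊Y⌋ is unimodal: there exists a natural number x₀ such that p is nondecreasing on {0,...,x₀} and nonincreasing on {x₀, x₀+1, ...}. -/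
open MeasureTheory

lemma step_mono17 {p : ℕ → ℝ} {n : ℕ} (h : ∀ x, x < n → p x ≤ p (x+1)) :
    ∀ a b : ℕ, a ≤ b → b ≤ n → p a ≤ p b := by
  intro a b hab hbn
  induction b with
  | zero => simp [Nat.le_zero.mp hab]
  | succ m ih =>
    rcases Nat.eq_or_lt_of_le hab with rfl | hlt
    · exact le_refl _
    · exact le_trans (ih (by omega) (by omega)) (h m (by omega))

lemma step_anti17 {p : ℕ → ℝ} {n : ℕ} (h : ∀ x, n ≤ x → p (x+1) ≤ p x) :
    ∀ a b : ℕ, n ≤ a → a ≤ b → p b ≤ p a := by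
  intro a b hna hab
  induction b with
  | zero => simp [Nat.le_zero.mp hab]
  | succ m ih =>
    rcases Nat.eq_or_lt_of_le hab with rfl | hlt
    · exact le_refl _
    · exact le_trans (h m (by omega)) (ih (by omega))

lemma int_le_int17 {f g : ℝ → ℝ} {a b : ℝ} (hab : a ≤ b)
    (hf : IntegrableOn f (Set.Ioc a b)) (hg : IntegrableOn g (Set.Ioc a b))
    (h : ∀ y ∈ Set.Ioc a b, f y ≤ g y) :
    ∫ y in a..b, f y ≤ ∫ y in a..b, g y := by
  rw [intervalIntegral.integral_of_le hab, intervalIntegral.integral_of_le hab]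
  exact setIntegral_mono_on hf hg measurableSet_Ioc h

/-- If `Y` has a unimodal density `f` on `(0,∞)` (nondecreasing up to some
`y₀ > 0`, nonincreasing afterwards), then the PMF `p(x) = ∫_x^{x+1} f` of `X = ⌊Y⌋` is
unimodal: there is an `x₀ ∈ ℕ` with `p` nondecreasing on `{0,…,x₀}` and nonincreasing on
`{x₀, x₀+1, …}`. -/
theorem stmt_17 (f : ℝ → ℝ) (hnn : ∀ y : ℝ, 0 ≤ f y) (hint : Integrable f)
    (hprob : ∫ y in Set.Ioi (0 : ℝ), f y = 1)
    (y₀ : ℝ) (hy₀ : 0 < y₀)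
    (hinc : ∀ y z : ℝ, 0 < y → y ≤ z → z ≤ y₀ → f y ≤ f z)
    (hdec : ∀ y z : ℝ, y₀ ≤ y → y ≤ z → f z ≤ f y)
    (p : ℕ → ℝ) (hp : ∀ x : ℕ, p x = ∫ y in (x : ℝ)..((x : ℝ) + 1), f y) :
    ∃ x₀ : ℕ, (∀ a b : ℕ, a ≤ b → b ≤ x₀ → p a ≤ p b) ∧
      (∀ a b : ℕ, x₀ ≤ a → a ≤ b → p b ≤ p a) := by
  have hfI : ∀ a b : ℝ, IntegrableOn f (Set.Ioc a b) := fun a b => hint.integrableOn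
  have hshift : Integrable (fun y => f (y + 1)) := hint.comp_add_right 1
  have hfSI : ∀ a b : ℝ, IntegrableOn (fun y => f (y + 1)) (Set.Ioc a b) :=
    fun a b => hshift.integrableOn
  -- p (x+1) as a shifted integral
  have hpshift : ∀ x : ℕ, p (x + 1) = ∫ y in (x : ℝ)..((x : ℝ) + 1), f (y + 1) := by
    intro x
    rw [hp (x + 1), intervalIntegral.integral_comp_add_right (fun y => f y) 1]
    push_cast
    ring_nf
  -- increasing steps
  have hstep_inc : ∀ x : ℕ, (x : ℝ) + 2 ≤ y₀ → p x ≤ p (x + 1) := by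
    intro x hx
    rw [hp x, hpshift x]
    refine int_le_int17 (by linarith) (hfI _ _) (hfSI _ _) ?_
    rintro y ⟨hy1, hy2⟩
    have h0 : (0 : ℝ) ≤ (x : ℝ) := Nat.cast_nonneg x
    exact hinc y (y + 1) (by linarith) (by linarith) (by linarith)
  -- decreasing steps
  have hstep_dec : ∀ x : ℕ, y₀ ≤ (x : ℝ) → p (x + 1) ≤ p x := by
    intro x hx
    rw [hp x, hpshift x]
    refine int_le_int17 (by linarith) (hfSI _ _) (hfI _ _) ?_
    rintro y ⟨hy1, hy2⟩
    exact hdec y (y + 1) (by linarith) (by linarith)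
  set k : ℕ := ⌊y₀⌋₊ with hk
  have hky : (k : ℝ) ≤ y₀ := Nat.floor_le hy₀.le
  have hyk1 : y₀ < (k : ℝ) + 1 := Nat.lt_floor_add_one y₀
  have hinc_steps : ∀ x : ℕ, x + 2 ≤ k → p x ≤ p (x + 1) := by
    intro x hx
    refine hstep_inc x ?_
    have : ((x : ℝ) + 2) ≤ (k : ℝ) := by exact_mod_cast hx
    linarith
  have hdec_steps : ∀ x : ℕ, k + 1 ≤ x → p (x + 1) ≤ p x := by
    intro x hx
    refine hstep_dec x ?_
    have : ((k : ℝ) + 1) ≤ (x : ℝ) := by exact_mod_cast hx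
    linarith
  by_cases h1 : p (k - 1) ≤ p k
  · by_cases h2 : p k ≤ p (k + 1)
    · refine ⟨k + 1, step_mono17 ?_, step_anti17 ?_⟩
      · intro x hx
        rcases Nat.lt_or_ge (x + 2) (k + 1) with hc | hc
        · exact hinc_steps x (by omega)
        · rcases Nat.lt_or_ge x k with hc2 | hc2
          · have hxk : x = k - 1 := by omega
            have hxk1 : (k - 1) + 1 = k := by omega
            rw [hxk, hxk1]; exact h1
          · have : x = k := by omega
            rw [this]; exact h2
      · intro x hx; exact hdec_steps x hx
    · refine ⟨k, step_mono17 ?_, step_anti17 ?_⟩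
      · intro x hx
        rcases Nat.lt_or_ge (x + 2) (k + 1) with hc | hc
        · exact hinc_steps x (by omega)
        · have hxk : x = k - 1 := by omega
          have hxk1 : (k - 1) + 1 = k := by omega
          rw [hxk, hxk1]; exact h1
      · intro x hx
        rcases Nat.eq_or_lt_of_le hx with rfl | hlt
        · exact (not_le.mp h2).le
        · exact hdec_steps x (by omega)
  · -- p (k-1) > p k; then k ≥ 1, and we show p (k+1) ≤ p k
    have hk1 : 1 ≤ k := by
      by_contra hc
      have : k = 0 := by omega
      exact h1 (by rw [this])
    have hkpos : (0 : ℝ) < (k : ℝ) := by exact_mod_cast hk1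
    have hkm1 : ((k - 1 : ℕ) : ℝ) = (k : ℝ) - 1 := by
      have : (k : ℕ) = (k - 1) + 1 := by omega
      push_cast [Nat.cast_sub hk1]; ring
    -- p (k-1) ≤ f k
    have hb1 : p (k - 1) ≤ f k := by
      rw [hp (k - 1), hkm1]
      have : f (k : ℝ) = ((k : ℝ) - 1 + 1 - ((k : ℝ) - 1)) • f (k : ℝ) := by
        simp
      calc ∫ y in ((k : ℝ) - 1)..((k : ℝ) - 1 + 1), f y
          ≤ ∫ _ in ((k : ℝ) - 1)..((k : ℝ) - 1 + 1), f (k : ℝ) := by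
            refine int_le_int17 (by linarith) (hfI _ _) ((integrableOn_const_iff (by finiteness)).mpr (Or.inr measure_Ioc_lt_top)) ?_
            rintro y ⟨hy1, hy2⟩
            exact hinc y k (by linarith) (by linarith) hky
        _ = f (k : ℝ) := by rw [intervalIntegral.integral_const]; simp
    -- p (k+1) ≤ f (k+1)
    have hb2 : p (k + 1) ≤ f ((k : ℝ) + 1) := by
      rw [hp (k + 1)]
      push_cast
      calc ∫ y in ((k : ℝ) + 1)..((k : ℝ) + 1 + 1), f y
          ≤ ∫ _ in ((k : ℝ) + 1)..((k : ℝ) + 1 + 1), f ((k : ℝ) + 1) := by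
            refine int_le_int17 (by linarith) (hfI _ _) ((integrableOn_const_iff (by finiteness)).mpr (Or.inr measure_Ioc_lt_top)) ?_
            rintro y ⟨hy1, hy2⟩
            exact hdec ((k : ℝ) + 1) y (by linarith) (by linarith)
        _ = f ((k : ℝ) + 1) := by rw [intervalIntegral.integral_const]; simp
    -- lower bound on p k
    have hb3 : (y₀ - (k : ℝ)) * f (k : ℝ) + ((k : ℝ) + 1 - y₀) * f ((k : ℝ) + 1) ≤ p k := by
      rw [hp k]
      have hsplit : ∫ y in (k : ℝ)..((k : ℝ) + 1), f y =
          (∫ y in (k : ℝ)..y₀, f y) + ∫ y in y₀..((k : ℝ) + 1), f y := by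
        rw [intervalIntegral.integral_add_adjacent_intervals
          hint.intervalIntegrable hint.intervalIntegrable]
      rw [hsplit]
      have hA : (y₀ - (k : ℝ)) * f (k : ℝ) ≤ ∫ y in (k : ℝ)..y₀, f y := by
        calc (y₀ - (k : ℝ)) * f (k : ℝ)
            = ∫ _ in (k : ℝ)..y₀, f (k : ℝ) := by
              rw [intervalIntegral.integral_const]; simp [smul_eq_mul]
          _ ≤ ∫ y in (k : ℝ)..y₀, f y := by
              refine int_le_int17 hky ((integrableOn_const_iff (by finiteness)).mpr (Or.inr measure_Ioc_lt_top)) (hfI _ _) ?_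
              rintro y ⟨hy1, hy2⟩
              exact hinc k y hkpos hy1.le hy2
      have hB : ((k : ℝ) + 1 - y₀) * f ((k : ℝ) + 1) ≤ ∫ y in y₀..((k : ℝ) + 1), f y := by
        calc ((k : ℝ) + 1 - y₀) * f ((k : ℝ) + 1)
            = ∫ _ in y₀..((k : ℝ) + 1), f ((k : ℝ) + 1) := by
              rw [intervalIntegral.integral_const]; simp [smul_eq_mul]
          _ ≤ ∫ y in y₀..((k : ℝ) + 1), f y := by
              refine int_le_int17 hyk1.le ((integrableOn_const_iff (by finiteness)).mpr (Or.inr measure_Ioc_lt_top)) (hfI _ _) ?_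
              rintro y ⟨hy1, hy2⟩
              exact hdec y ((k : ℝ) + 1) hy1.le hy2
      linarith
    have hkey : p (k + 1) ≤ p k := by
      have hpk : p k < f (k : ℝ) := lt_of_lt_of_le (not_le.mp h1) hb1
      nlinarith [hky, hyk1, hb2, hb3]
    refine ⟨k - 1, step_mono17 ?_, step_anti17 ?_⟩
    · intro x hx
      exact hinc_steps x (by omega)
    · intro x hx
      rcases Nat.lt_or_ge x k with hc | hc
      · have : x = k - 1 := by omega
        rw [this]
        have : (k - 1) + 1 = k := by omega
        rw [this]
        exact (not_le.mp h1).le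
      · rcases Nat.eq_or_lt_of_le hc with rfl | hlt
        · exact hkey
        · exact hdec_steps x (by omega)
end
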